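/- Let ω, κ, ε, c be positive real numbers, set q := iω/κ, k_p := ω/c, and C_± := i(1+ε)c² ± (1+i)c√(2ωκ). Assume ωκ + C₋ ≠ 0, and define k₁ := (1/(2c))√(ω/κ)[√(ωκ+C₊) + √(ωκ+C₋)] and k₂ := (1/(2c))√(ω/κ)[√(ωκ+C₊) − √(ωκ+C₋)], where √ denotes the principal complex square root. Then k₁² + k₂² = q(1+ε) + k_p² and k₁² k₂² = q k_p². -/
import Mathlib


noncomputable section

open scoped BigOperators

/-- Three-dimensional Euclidean space. -/
abbrev V3 : Type := EuclideanSpace ℝ (Fin 3)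

/-- Partial derivative in the `i`-th coordinate direction. -/
def pd (i : Fin 3) (f : V3 → ℂ) : V3 → ℂ :=
  fun x => fderiv ℝ f x (EuclideanSpace.single i (1 : ℝ))

/-- Laplacian. -/
def lap (f : V3 → ℂ) : V3 → ℂ := fun x => ∑ i, pd i (pd i f) x

/-- Directional derivative `ν·∇` along the constant vector `ν`. -/
def dirD (ν : Fin 3 → ℝ) (f : V3 → ℂ) : V3 → ℂ :=
  fun x => ∑ i, (ν i : ℂ) * pd i f x

/-- Divergence of a vector field. -/
def vdiv (v : Fin 3 → V3 → ℂ) : V3 → ℂ := fun x => ∑ i, pd i (v i) x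

/-- Levi–Civita symbol on `Fin 3`. -/
def eps (i j k : Fin 3) : ℝ :=
  if (i, j, k) = (0, 1, 2) ∨ (i, j, k) = (1, 2, 0) ∨ (i, j, k) = (2, 0, 1) then 1
  else if (i, j, k) = (0, 2, 1) ∨ (i, j, k) = (2, 1, 0) ∨ (i, j, k) = (1, 0, 2) then -1
  else 0

/-- Curl of a vector field: `(curl v)_i = Σ_{l,m} ε_{ilm} ∂_l v_m`. -/
def curl (v : Fin 3 → V3 → ℂ) : Fin 3 → V3 → ℂ :=
  fun i x => ∑ l, ∑ m, (eps i l m : ℂ) * pd l (v m) x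

/-- Cross product of a constant real vector with a complex vector. -/
def crossR (ν : Fin 3 → ℝ) (w : Fin 3 → ℂ) : Fin 3 → ℂ :=
  fun i => ∑ l, ∑ m, (eps i l m : ℂ) * (ν l : ℂ) * w m

/-- Günter derivative `M(∂,ν)` acting on a vector field,
with entries `m^{ij}(∂,ν) = ν^j ∂_i − ν^i ∂_j`. -/
def gunterM (ν : Fin 3 → ℝ) (v : Fin 3 → V3 → ℂ) : Fin 3 → V3 → ℂ :=
  fun i x => ∑ j, ((ν j : ℂ) * pd i (v j) x - (ν i : ℂ) * pd j (v j) x)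

/-- Traction operator `T(∂,ν)v = 2μ ∂_ν v + λ ν (∇·v) + μ ν × curl v`. -/
def traction (lam μ : ℝ) (ν : Fin 3 → ℝ) (v : Fin 3 → V3 → ℂ) : Fin 3 → V3 → ℂ :=
  fun i x => 2 * (μ : ℂ) * dirD ν (v i) x + (lam : ℂ) * (ν i : ℂ) * vdiv v x
    + (μ : ℂ) * crossR ν (fun m => curl v m x) i

/-- Helmholtz fundamental solution `γ_k(x,y) = exp(i k |x−y|)/(4π|x−y|)`. -/
def gammaK (k : ℂ) (x y : V3) : ℂ :=
  Complex.exp (Complex.I * k * (‖x - y‖ : ℂ)) / ((4 * Real.pi * ‖x - y‖ : ℝ) : ℂ)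

/-- Kupradze tensor entry `E(x,y)_{ij}`:
`E = (1/μ)γ_{k_s} I + (1/(ρω²)) ∇_x∇_x^⊤[γ_{k_s} − γ_{k_p}]`. -/
def kupE (μ ρ ω : ℝ) (ks kp : ℂ) (i j : Fin 3) (x y : V3) : ℂ :=
  (1 / (μ : ℂ)) * gammaK ks x y * (if i = j then 1 else 0)
    + (1 / ((ρ : ℂ) * (ω : ℂ) ^ 2)) *
      pd i (pd j (fun w => gammaK ks w y - gammaK kp w y)) x

/-- Thermoelastic fundamental-solution block `E₁₁`, entry `(i,j)`. -/
def E11 (μ ρ ω : ℝ) (ks kp k1 k2 : ℂ) (i j : Fin 3) (x y : V3) : ℂ :=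
  (1 / (μ : ℂ)) * gammaK ks x y * (if i = j then 1 else 0)
    + (1 / ((ρ : ℂ) * (ω : ℂ) ^ 2)) *
      pd i (pd j (fun w => gammaK ks w y - gammaK k1 w y)) x
    - (1 / ((ρ : ℂ) * (ω : ℂ) ^ 2)) * ((kp ^ 2 - k1 ^ 2) / (k1 ^ 2 - k2 ^ 2)) *
      pd i (pd j (fun w => gammaK k1 w y - gammaK k2 w y)) x

/-- Thermoelastic fundamental-solution block `E₁₂`, component `j`. -/
def E12 (lam μ gam : ℝ) (k1 k2 : ℂ) (j : Fin 3) (x y : V3) : ℂ :=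
  -((gam : ℂ) / ((k1 ^ 2 - k2 ^ 2) * ((lam : ℂ) + 2 * (μ : ℂ)))) *
    pd j (fun w => gammaK k1 w y - gammaK k2 w y) x

/-- Thermoelastic fundamental-solution block `E₂₁`, component `j`. -/
def E21 (lam μ ω η : ℝ) (k1 k2 : ℂ) (j : Fin 3) (x y : V3) : ℂ :=
  (Complex.I * (ω : ℂ) * (η : ℂ) / ((k1 ^ 2 - k2 ^ 2) * ((lam : ℂ) + 2 * (μ : ℂ)))) *
    pd j (fun w => gammaK k1 w y - gammaK k2 w y) x

/-- Thermoelastic fundamental-solution block `E₂₂`. -/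
def E22 (kp k1 k2 : ℂ) (x y : V3) : ℂ :=
  -(1 / (k1 ^ 2 - k2 ^ 2)) *
    ((kp ^ 2 - k1 ^ 2) * gammaK k1 x y - (kp ^ 2 - k2 ^ 2) * gammaK k2 x y)

/-- The explicit wavenumbers `k₁, k₂` of linearized thermoelasticity satisfy
the characteristic relations `k₁² + k₂² = q(1+ε) + k_p²` and `k₁²k₂² = q k_p²`.
Here `z ^ ((1:ℂ)/2)` is the principal complex square root. -/
theorem stmt_9 (ω κ ε c : ℝ) (hω : 0 < ω) (hκ : 0 < κ) (hε : 0 < ε) (hc : 0 < c)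
    (q kp Cp Cm k1 k2 : ℂ)
    (hq : q = Complex.I * (ω : ℂ) / (κ : ℂ))
    (hkp : kp = ((ω / c : ℝ) : ℂ))
    (hCp : Cp = Complex.I * (1 + (ε : ℂ)) * (c : ℂ) ^ 2
      + (1 + Complex.I) * (c : ℂ) * ((Real.sqrt (2 * ω * κ) : ℝ) : ℂ))
    (hCm : Cm = Complex.I * (1 + (ε : ℂ)) * (c : ℂ) ^ 2
      - (1 + Complex.I) * (c : ℂ) * ((Real.sqrt (2 * ω * κ) : ℝ) : ℂ))
    (hne : ((ω * κ : ℝ) : ℂ) + Cm ≠ 0)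
    (hk1 : k1 = ((1 / (2 * c) : ℝ) : ℂ) * (((ω / κ : ℝ) : ℂ) ^ ((1 : ℂ) / 2)) *
      (((((ω * κ : ℝ) : ℂ) + Cp) ^ ((1 : ℂ) / 2))
        + ((((ω * κ : ℝ) : ℂ) + Cm) ^ ((1 : ℂ) / 2))))
    (hk2 : k2 = ((1 / (2 * c) : ℝ) : ℂ) * (((ω / κ : ℝ) : ℂ) ^ ((1 : ℂ) / 2)) *
      (((((ω * κ : ℝ) : ℂ) + Cp) ^ ((1 : ℂ) / 2))
        - ((((ω * κ : ℝ) : ℂ) + Cm) ^ ((1 : ℂ) / 2)))) :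
    k1 ^ 2 + k2 ^ 2 = q * (1 + (ε : ℂ)) + kp ^ 2 ∧
      k1 ^ 2 * k2 ^ 2 = q * kp ^ 2 := by
  have hc0 : (c : ℂ) ≠ 0 := by exact_mod_cast hc.ne'
  have hκ0 : (κ : ℂ) ≠ 0 := by exact_mod_cast hκ.ne'
  set a := (((ω * κ : ℝ) : ℂ) + Cp) ^ ((1 : ℂ) / 2) with ha_def
  set b := (((ω * κ : ℝ) : ℂ) + Cm) ^ ((1 : ℂ) / 2) with hb_def
  set t := ((ω / κ : ℝ) : ℂ) ^ ((1 : ℂ) / 2) with ht_def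
  have h2 : (1 : ℂ) / 2 = ((2 : ℕ) : ℂ)⁻¹ := by norm_num
  have ha : a ^ 2 = ((ω * κ : ℝ) : ℂ) + Cp := by
    rw [ha_def, h2]; exact Complex.cpow_nat_inv_pow _ (by norm_num)
  have hb : b ^ 2 = ((ω * κ : ℝ) : ℂ) + Cm := by
    rw [hb_def, h2]; exact Complex.cpow_nat_inv_pow _ (by norm_num)
  have ht : t ^ 2 = ((ω / κ : ℝ) : ℂ) := by
    rw [ht_def, h2]; exact Complex.cpow_nat_inv_pow _ (by norm_num)
  have hr : (((Real.sqrt (2 * ω * κ)) : ℝ) : ℂ) ^ 2 = ((2 * ω * κ : ℝ) : ℂ) := by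
    rw [← Complex.ofReal_pow, Real.sq_sqrt (by positivity)]
  constructor
  · have expand : k1 ^ 2 + k2 ^ 2
        = ((1 / (2 * c) : ℝ) : ℂ) ^ 2 * t ^ 2 * (2 * a ^ 2 + 2 * b ^ 2) := by
      rw [hk1, hk2]; ring
    rw [expand, ht, ha, hb, hCp, hCm, hq, hkp]
    push_cast
    field_simp
    ring
  · have expand : k1 ^ 2 * k2 ^ 2
        = ((1 / (2 * c) : ℝ) : ℂ) ^ 4 * t ^ 4 * (a ^ 2 - b ^ 2) ^ 2 := by
      rw [hk1, hk2]; ring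
    have ht4 : t ^ 4 = ((ω / κ : ℝ) : ℂ) ^ 2 := by
      rw [show (4 : ℕ) = 2 * 2 from rfl, pow_mul, ht]
    rw [expand, ht4, ha, hb, hCp, hCm, hq, hkp]
    have key : (((ω * κ : ℝ) : ℂ) + (Complex.I * (1 + (ε : ℂ)) * (c : ℂ) ^ 2
          + (1 + Complex.I) * (c : ℂ) * ((Real.sqrt (2 * ω * κ) : ℝ) : ℂ))
        - (((ω * κ : ℝ) : ℂ) + (Complex.I * (1 + (ε : ℂ)) * (c : ℂ) ^ 2
          - (1 + Complex.I) * (c : ℂ) * ((Real.sqrt (2 * ω * κ) : ℝ) : ℂ)))) ^ 2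
        = 4 * (1 + Complex.I) ^ 2 * (c : ℂ) ^ 2 * ((2 * ω * κ : ℝ) : ℂ) := by
      rw [← hr]; ring
    rw [key]
    have hI : (1 + Complex.I) ^ 2 = 2 * Complex.I := by
      have := Complex.I_sq; ring_nf; rw [Complex.I_sq]; ring
    rw [hI]
    push_cast
    field_simp
    ring
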